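/- Let F be a field of characteristic 0 and n, d ≥ 1. Let f be a nonzero element of the unitization of F_{Ā,C̄}[X] whose F_{Ā,C̄}[X]-component f₀ has degree ≤ d and satisfies f₀ ∉ I_comm or f has nonzero scalar component (i.e., the image of f in the unitization of F_{Ā,C}[X] is nonzero). Then f is not a polynomial identity for the commutative nonassociative algebra C_d: there exist b_1, …, b_n ∈ C_d such that the evaluation of f at (b_1,…,b_n) — via the unique unital F-algebra homomorphism from the unitization of F_{Ā,C̄}[X] to C_d sending x_i ↦ b_i — is nonzero. -/

import Mathlib

noncomputable section

open scoped BigOperators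

namespace NAPIT

/-- The list of (leaf label, leaf level) pairs of a nonassociative monomial (element of the
free magma), in left-to-right order, where the root of the monomial is at level `s`. -/
def leafData {n : ℕ} : FreeMagma (Fin n) → ℕ → List (Fin n × ℕ)
  | FreeMagma.of i, s => [(i, s)]
  | FreeMagma.mul x y, s => leafData x (s + 1) ++ leafData y (s + 1)

/-- The degree (number of leaves) of a nonassociative monomial. -/
def degM {n : ℕ} : FreeMagma (Fin n) → ℕ
  | FreeMagma.of _ => 1
  | FreeMagma.mul x y => degM x + degM y

/-- The depth of a nonassociative monomial (root at level 1; the depth is the maximal level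
of a leaf). -/
def depthM {n : ℕ} : FreeMagma (Fin n) → ℕ
  | FreeMagma.of _ => 1
  | FreeMagma.mul x y => max (depthM x) (depthM y) + 1

/-- Evaluation of a nonassociative monomial at `b : Fin n → A`, using `mul` as the product on
`A`; this is the unique magma homomorphism `FreeMagma (Fin n) → (A, mul)` with `x_i ↦ b i`. -/
def evalWith {n : ℕ} {A : Type*} (mul : A → A → A) (b : Fin n → A) : FreeMagma (Fin n) → A
  | FreeMagma.of i => b i
  | FreeMagma.mul x y => mul (evalWith mul b x) (evalWith mul b y)

/-- The multiset of all variants `m_ε` of a monomial `m`, where `ε` ranges over all choices of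
a Boolean for each internal node of `m`, and `m_ε` is obtained from `m` by swapping the two
children at exactly those internal nodes where `ε` is true (counted with multiplicity). -/
def variants {n : ℕ} : FreeMagma (Fin n) → Multiset (FreeMagma (Fin n))
  | FreeMagma.of i => {FreeMagma.of i}
  | FreeMagma.mul x y =>
      (variants x).bind fun x' => (variants y).bind fun y' =>
        {FreeMagma.mul x' y', FreeMagma.mul y' x'}

/-- The underlying module of the algebra `A'_d(R)`: arrays `x[i,j,k]` with
`i, j ∈ Fin (d+1)`, `k ∈ Fin d` (zero-based; the paper's indices are shifted by one). -/
def Arr (d : ℕ) (R : Type*) : Type _ := Fin (d + 1) → Fin (d + 1) → Fin d → R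

namespace Arr

variable {d : ℕ} {R : Type*}

instance instAddCommGroup [AddCommGroup R] : AddCommGroup (Arr d R) :=
  inferInstanceAs (AddCommGroup (Fin (d + 1) → Fin (d + 1) → Fin d → R))

instance instModule {S : Type*} [Semiring S] [AddCommGroup R] [Module S R] :
    Module S (Arr d R) :=
  inferInstanceAs (Module S (Fin (d + 1) → Fin (d + 1) → Fin d → R))

/-- The bilinear product `∘` of `A'_d(R)`:
`(x ∘ y)[i,j,k] = ∑_{l} x[i,l,k+1] * y[l,j,k+1]` if `k+1` is a legal third index, else `0`. -/
def aprod [CommRing R] (x y : Arr d R) : Arr d R := fun i j k =>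
  if h : (k : ℕ) + 1 < d then
    ∑ l : Fin (d + 1), x i l ⟨(k : ℕ) + 1, h⟩ * y l j ⟨(k : ℕ) + 1, h⟩
  else 0

instance instMul [CommRing R] : Mul (Arr d R) := ⟨aprod⟩

end Arr

/-- The algebra `C'_d(R)`: same underlying module as `A'_d(R)`, with the anticommutator
product `a ⊙ b = a ∘ b + b ∘ a`. -/
def CArr (d : ℕ) (R : Type*) : Type _ := Arr d R

namespace CArr

variable {d : ℕ} {R : Type*}

/-- The identity map `A'_d(R) → C'_d(R)` of underlying modules. -/
def ofArr (x : Arr d R) : CArr d R := x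

/-- The identity map `C'_d(R) → A'_d(R)` of underlying modules. -/
def toArr (x : CArr d R) : Arr d R := x

instance instAddCommGroup [AddCommGroup R] : AddCommGroup (CArr d R) :=
  inferInstanceAs (AddCommGroup (Arr d R))

instance instModule {S : Type*} [Semiring S] [AddCommGroup R] [Module S R] :
    Module S (CArr d R) :=
  inferInstanceAs (Module S (Arr d R))

instance instMul [CommRing R] : Mul (CArr d R) :=
  ⟨fun a b => ofArr (toArr a * toArr b + toArr b * toArr a)⟩

end CArr

/-- The element `Z_i ∈ A'_d(R)`, `R = MvPolynomial (Fin n × Fin d × Fin d) F`, whose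
`(j, j+1, k)` entry is the indeterminate `z_{i,j,k}` and whose other entries vanish. -/
def Z (F : Type*) [CommRing F] (n d : ℕ) (i : Fin n) :
    Arr d (MvPolynomial (Fin n × Fin d × Fin d) F) := fun j j' k =>
  if h : (j : ℕ) < d ∧ (j' : ℕ) = (j : ℕ) + 1 then
    MvPolynomial.X (i, ⟨(j : ℕ), h.1⟩, k)
  else 0

/-- The element `Z_i` regarded as an element of `C'_d(R)`. -/
def ZC (F : Type*) [CommRing F] (n d : ℕ) (i : Fin n) :
    CArr d (MvPolynomial (Fin n × Fin d × Fin d) F) := CArr.ofArr (Z F n d i)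

/-- The monomial `∏_{t=1}^{d'} z_{σ_m(t), (t-1) + k1, (l^m_t - 1) + k2}` associated to a
nonassociative monomial `m` of degree `d'` and offsets `k1, k2` (all indices zero-based; the
paper's 1-based offsets are `k1 + 1`, `k2 + 1`).  Indices which would fall out of range are
discarded (this never happens in the intended range of parameters). -/
def monProd (F : Type*) [CommRing F] {n : ℕ} (d : ℕ) (k1 k2 : ℕ) (m : FreeMagma (Fin n)) :
    MvPolynomial (Fin n × Fin d × Fin d) F :=
  (((leafData m 1).zipIdx.map Prod.swap).map fun p =>
    if h : p.1 + k1 < d ∧ p.2.2 - 1 + k2 < d then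
      MvPolynomial.X (p.2.1, ⟨p.1 + k1, h.1⟩, ⟨p.2.2 - 1 + k2, h.2⟩)
    else 0).prod

/-- `ψ(m) = ∑_ε ∏_{t=1}^{d'} z_{σ_{m_ε}(t), t, l^{m_ε}_t}` (1-based), the sum running over all
choices `ε` of a Boolean for each internal node of `m`. -/
def psi (F : Type*) [CommRing F] {n : ℕ} (d : ℕ) (m : FreeMagma (Fin n)) :
    MvPolynomial (Fin n × Fin d × Fin d) F :=
  ((variants m).map fun m' => monProd F d 0 0 m').sum

/-- The coefficient function of an element of the free nonunital nonassociative algebra. -/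
def coeffOf {F : Type*} [Semiring F] {n : ℕ}
    (f : FreeNonUnitalNonAssocAlgebra F (Fin n)) : FreeMagma (Fin n) →₀ F := f.coeff

/-- Evaluation of an element of the free nonunital nonassociative algebra on `x_1, …, x_n` at
the tuple `b`, with `mul` as the product of the target: the linear extension of
`m ↦ evalWith mul b m`, i.e. the unique nonunital `F`-algebra homomorphism sending
`x_i ↦ b i` into `(A, mul)`. -/
def evalNAWith {F : Type*} [Semiring F] {n : ℕ} {A : Type*}
    [AddCommMonoid A] [Module F A] (mul : A → A → A) (b : Fin n → A)
    (f : FreeNonUnitalNonAssocAlgebra F (Fin n)) : A :=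
  Finsupp.sum (coeffOf f) fun m c => c • evalWith mul b m

/-- Evaluation of an element of the free nonunital nonassociative algebra at a tuple `b` of
elements of a (not necessarily unital/associative) algebra `A`: the unique nonunital
`F`-algebra homomorphism sending `x_i ↦ b i`. -/
def evalNA {F : Type*} [Semiring F] {n : ℕ} {A : Type*}
    [AddCommMonoid A] [Mul A] [Module F A] (b : Fin n → A)
    (f : FreeNonUnitalNonAssocAlgebra F (Fin n)) : A :=
  evalNAWith (· * ·) b f

/-- Evaluation of an element of the unitization of the free nonunital nonassociative algebra
at a tuple `b` of elements of the unitization of `A`: the unique unital `F`-algebra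
homomorphism sending `x_i ↦ b i` (and the adjoined unit to the unit). -/
def evalUnit {F : Type*} [CommSemiring F] {n : ℕ} {A : Type*}
    [AddCommMonoid A] [Mul A] [Module F A] (b : Fin n → Unitization F A)
    (f : Unitization F (FreeNonUnitalNonAssocAlgebra F (Fin n))) : Unitization F A :=
  Unitization.inl f.fst + evalNA b f.snd

/-- The commutativity congruence on the free magma: the smallest equivalence relation with
`m₁ * m₂ ≈ m₂ * m₁` and compatible with the product. -/
inductive CommEq {n : ℕ} : FreeMagma (Fin n) → FreeMagma (Fin n) → Prop
  | refl (m : FreeMagma (Fin n)) : CommEq m m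
  | symm {a b : FreeMagma (Fin n)} : CommEq a b → CommEq b a
  | trans {a b c : FreeMagma (Fin n)} : CommEq a b → CommEq b c → CommEq a c
  | comm (a b : FreeMagma (Fin n)) : CommEq (a * b) (b * a)
  | mul_congr {a a' b b' : FreeMagma (Fin n)} :
      CommEq a a' → CommEq b b' → CommEq (a * b) (a' * b')

/-- The basis monomial `m` of the free nonunital nonassociative algebra. -/
def single1 (F : Type*) [Semiring F] {n : ℕ} (m : FreeMagma (Fin n)) :
    FreeNonUnitalNonAssocAlgebra F (Fin n) :=
  MonoidAlgebra.ofCoeff (Finsupp.single m 1 : FreeMagma (Fin n) →₀ F)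

/-- `I_comm`: the `F`-linear span of `{m − m' : m ≈ m'}` inside the free nonunital
nonassociative algebra. -/
def Icomm (F : Type*) [Field F] (n : ℕ) :
    Submodule F (FreeNonUnitalNonAssocAlgebra F (Fin n)) :=
  Submodule.span F
    {x | ∃ m m' : FreeMagma (Fin n), CommEq m m' ∧ x = single1 F m - single1 F m'}

variable {n : ℕ}

@[simp] lemma degM_of (i : Fin n) : degM (FreeMagma.of i) = 1 := rfl
@[simp] lemma degM_mul (x y : FreeMagma (Fin n)) : degM (x * y) = degM x + degM y := rfl
@[simp] lemma depthM_of (i : Fin n) : depthM (FreeMagma.of i) = 1 := rfl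
@[simp] lemma depthM_mul (x y : FreeMagma (Fin n)) :
    depthM (x * y) = max (depthM x) (depthM y) + 1 := rfl
@[simp] lemma leafData_of (i : Fin n) (s : ℕ) : leafData (FreeMagma.of i) s = [(i, s)] := rfl
@[simp] lemma leafData_mul (x y : FreeMagma (Fin n)) (s : ℕ) :
    leafData (x * y) s = leafData x (s + 1) ++ leafData y (s + 1) := rfl

lemma degM_pos (m : FreeMagma (Fin n)) : 1 ≤ degM m := by
  induction m with
  | ih1 i => simp
  | ih2 x y ihx ihy => simp; omega

lemma depthM_le_degM (m : FreeMagma (Fin n)) : depthM m ≤ degM m := by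
  induction m with
  | ih1 i => simp
  | ih2 x y ihx ihy =>
    have hx := degM_pos x; have hy := degM_pos y
    simp only [depthM_mul, degM_mul]
    omega

lemma CommEq.degM_eq {m m' : FreeMagma (Fin n)} (h : CommEq m m') : degM m = degM m' := by
  induction h with
  | refl m => rfl
  | symm _ ih => omega
  | trans _ _ ih1 ih2 => omega
  | comm a b => simp; omega
  | mul_congr _ _ ih1 ih2 => simp; omega

lemma leafData_length (m : FreeMagma (Fin n)) (s : ℕ) : (leafData m s).length = degM m := by
  induction m generalizing s with
  | ih1 i => rfl
  | ih2 x y ihx ihy => simp [ihx, ihy]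

lemma leafData_level {m : FreeMagma (Fin n)} {s : ℕ} {p : Fin n × ℕ} (hp : p ∈ leafData m s) :
    s ≤ p.2 ∧ p.2 < s + depthM m := by
  induction m generalizing s with
  | ih1 i => simp at hp; subst hp; simp
  | ih2 x y ihx ihy =>
    simp at hp
    rcases hp with hp | hp
    · have := ihx hp; simp; omega
    · have := ihy hp; simp; omega

lemma leafData_shift (m : FreeMagma (Fin n)) (s : ℕ) :
    leafData m (s + 1) = (leafData m s).map (fun p => (p.1, p.2 + 1)) := by
  induction m generalizing s with
  | ih1 i => rfl
  | ih2 x y ihx ihy => simp [ihx, ihy]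

/-- Kraft weight of a list of leaf data. -/
def kraft (L : List ((Fin n) × ℕ)) : ℚ := (L.map fun p => ((2:ℚ) ^ p.2)⁻¹).sum

lemma kraft_leafData (m : FreeMagma (Fin n)) (s : ℕ) : kraft (leafData m s) = ((2:ℚ) ^ s)⁻¹ := by
  induction m generalizing s with
  | ih1 i => simp [kraft]
  | ih2 x y ihx ihy =>
    simp only [leafData_mul, kraft, List.map_append, List.sum_append]
    have hx := ihx (s+1); have hy := ihy (s+1)
    simp only [kraft] at hx hy
    rw [hx, hy, pow_succ, mul_inv]
    ring

lemma kraft_append (A B : List ((Fin n) × ℕ)) : kraft (A ++ B) = kraft A + kraft B := by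
  simp [kraft]

lemma kraft_pos {L : List ((Fin n) × ℕ)} (hL : L ≠ []) : 0 < kraft L := by
  rcases L with _ | ⟨p, L⟩
  · exact absurd rfl hL
  · have h1 : 0 < ((2:ℚ) ^ p.2)⁻¹ := by positivity
    have h2 : 0 ≤ kraft L := by
      apply List.sum_nonneg
      intro x hx
      simp at hx
      obtain ⟨a, b, hab, rfl⟩ := hx
      positivity
    simp only [kraft, List.map_cons, List.sum_cons]
    exact add_pos_of_pos_of_nonneg h1 h2

lemma leafData_inj (m m' : FreeMagma (Fin n)) (s : ℕ) (h : leafData m s = leafData m' s) :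
    m = m' := by
  induction m generalizing m' s with
  | ih1 i =>
    cases m' with
    | of i' => simp at h; simp [h]
    | mul x y =>
      exfalso
      have h1 : (leafData (FreeMagma.of i) s).length = 1 := rfl
      rw [h] at h1
      rw [leafData_length] at h1
      have hx := degM_pos x; have hy := degM_pos y
      have : degM (FreeMagma.mul x y) = degM x + degM y := rfl
      omega
  | ih2 x y ihx ihy =>
    cases m' with
    | of i' =>
      exfalso
      have h1 : (leafData (FreeMagma.of i') s).length = 1 := rfl
      rw [← h] at h1
      have h2 : leafData (x * y) s = leafData x (s+1) ++ leafData y (s+1) := rfl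
      rw [h2, List.length_append, leafData_length, leafData_length] at h1
      have hx := degM_pos x; have hy := degM_pos y
      omega
    | mul x' y' =>
      have h2 : leafData (FreeMagma.mul x' y') s = leafData x' (s+1) ++ leafData y' (s+1) := rfl
      simp only [leafData_mul] at h
      rw [h2] at h
      have key : leafData x (s+1) = leafData x' (s+1) := by
        rcases List.append_eq_append_iff.1 h with ⟨M, hM1, hM2⟩ | ⟨M, hM1, hM2⟩
        · have hk : kraft (leafData x' (s+1)) = kraft (leafData x (s+1)) + kraft M := by
            rw [hM1, kraft_append]
          rw [kraft_leafData, kraft_leafData] at hk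
          have hM : M = [] := by
            by_contra hne
            have := kraft_pos hne
            have h2 : ((2:ℚ)^(s+1))⁻¹ < ((2:ℚ)^(s+1))⁻¹ := by
              nlinarith [hk, this]
            exact lt_irrefl _ h2
          rw [hM1, hM, List.append_nil]
        · have hk : kraft (leafData x (s+1)) = kraft (leafData x' (s+1)) + kraft M := by
            rw [hM1, kraft_append]
          rw [kraft_leafData, kraft_leafData] at hk
          have hM : M = [] := by
            by_contra hne
            have := kraft_pos hne
            have h2 : ((2:ℚ)^(s+1))⁻¹ < ((2:ℚ)^(s+1))⁻¹ := by
              nlinarith [hk, this]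
            exact lt_irrefl _ h2
          rw [hM1, hM, List.append_nil]
      have key2 : leafData y (s+1) = leafData y' (s+1) := by
        rw [key] at h
        exact List.append_cancel_left h
      have e1 : x = x' := ihx x' (s+1) key
      have e2 : y = y' := ihy y' (s+1) key2
      show x * y = x' * y'
      rw [e1, e2]

lemma depthM_pos (m : FreeMagma (Fin n)) : 1 ≤ depthM m := by
  induction m with
  | ih1 i => simp
  | ih2 x y ihx ihy => simp
@[simp] lemma variants_of (i : Fin n) : variants (FreeMagma.of i) = {FreeMagma.of i} := rfl
@[simp] lemma variants_mul (x y : FreeMagma (Fin n)) :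
    variants (x * y) = (variants x).bind fun x' => (variants y).bind fun y' =>
      {FreeMagma.mul x' y', FreeMagma.mul y' x'} := rfl

lemma mem_variants_self (m : FreeMagma (Fin n)) : m ∈ variants m := by
  induction m with
  | ih1 i => simp
  | ih2 x y ihx ihy =>
    simp only [variants_mul, Multiset.mem_bind]
    exact ⟨x, ihx, y, ihy, by simp⟩

lemma commEq_of_mem_variants {m m' : FreeMagma (Fin n)} (h : m' ∈ variants m) : CommEq m m' := by
  induction m generalizing m' with
  | ih1 i => simp at h; subst h; exact CommEq.refl _
  | ih2 x y ihx ihy =>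
    simp only [variants_mul, Multiset.mem_bind] at h
    obtain ⟨x', hx', y', hy', hm⟩ := h
    simp only [Multiset.insert_eq_cons, Multiset.mem_cons, Multiset.mem_singleton] at hm
    have h1 : CommEq (x * y) (x' * y') := CommEq.mul_congr (ihx hx') (ihy hy')
    rcases hm with rfl | rfl
    · exact h1
    · exact h1.trans (CommEq.comm x' y')

lemma variants_eq_of_commEq {m m' : FreeMagma (Fin n)} (h : CommEq m m') :
    variants m = variants m' := by
  induction h with
  | refl m => rfl
  | symm _ ih => exact ih.symm
  | trans _ _ ih1 ih2 => exact ih1.trans ih2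
  | comm a b =>
    show variants (a * b) = variants (b * a)
    rw [variants_mul, variants_mul, Multiset.bind_bind]
    congr 1; funext y'; congr 1; funext x'
    exact Multiset.cons_swap _ _ _
  | mul_congr _ _ ih1 ih2 =>
    show variants (_ * _) = variants (_ * _)
    rw [variants_mul, variants_mul, ih1, ih2]
section ArrLemmas
variable {d : ℕ} {R : Type*} [CommRing R]

@[simp] lemma Arr.zero_apply (i j : Fin (d+1)) (k : Fin d) : (0 : Arr d R) i j k = 0 := rfl
@[simp] lemma Arr.add_apply (x y : Arr d R) (i j : Fin (d+1)) (k : Fin d) :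
    (x + y) i j k = x i j k + y i j k := rfl
@[simp] lemma Arr.smul_apply {S : Type*} [Semiring S] [Module S R] (c : S) (x : Arr d R)
    (i j : Fin (d+1)) (k : Fin d) : (c • x) i j k = c • x i j k := rfl

lemma aprod_zero_left (y : Arr d R) : Arr.aprod 0 y = 0 := by
  funext i j k
  simp only [Arr.aprod]
  split <;> simp

lemma aprod_zero_right (x : Arr d R) : Arr.aprod x 0 = 0 := by
  funext i j k
  simp only [Arr.aprod]
  split <;> simp

lemma aprod_add_left (a b y : Arr d R) :
    Arr.aprod (a + b) y = Arr.aprod a y + Arr.aprod b y := by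
  funext i j k
  show _ = Arr.aprod a y i j k + Arr.aprod b y i j k
  simp only [Arr.aprod]
  split
  · rw [← Finset.sum_add_distrib]
    congr 1; funext l; simp; ring
  · simp

lemma aprod_add_right (x a b : Arr d R) :
    Arr.aprod x (a + b) = Arr.aprod x a + Arr.aprod x b := by
  funext i j k
  show _ = Arr.aprod x a i j k + Arr.aprod x b i j k
  simp only [Arr.aprod]
  split
  · rw [← Finset.sum_add_distrib]
    congr 1; funext l; simp; ring
  · simp

lemma aprod_sum_left (s : Multiset (Arr d R)) (y : Arr d R) :
    Arr.aprod s.sum y = (s.map fun a => Arr.aprod a y).sum := by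
  induction s using Multiset.induction_on with
  | empty => simp [aprod_zero_left]
  | cons a s ih => simp [aprod_add_left, ih]

lemma aprod_sum_right (x : Arr d R) (s : Multiset (Arr d R)) :
    Arr.aprod x s.sum = (s.map fun b => Arr.aprod x b).sum := by
  induction s using Multiset.induction_on with
  | empty => simp [aprod_zero_right]
  | cons a s ih => simp [aprod_add_right, ih]

/-- The commutative product on `Arr d R` (the product of `CArr d R`). -/
def cmul (a b : Arr d R) : Arr d R := Arr.aprod a b + Arr.aprod b a

lemma carr_mul_eq (a b : CArr d R) :
    a * b = cmul (CArr.toArr a) (CArr.toArr b) := rfl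

lemma arr_mul_eq (a b : Arr d R) : a * b = Arr.aprod a b := rfl

/-- Evaluation of a monomial in `C'_d(R)` is the sum of the `A'_d(R)`-evaluations of its
variants. -/
lemma evalWith_cmul_eq_sum_variants {n : ℕ} (b : Fin n → Arr d R) (m : FreeMagma (Fin n)) :
    evalWith cmul b m = ((variants m).map (evalWith Arr.aprod b)).sum := by
  induction m with
  | ih1 i => simp [evalWith]
  | ih2 x y ihx ihy =>
    show cmul (evalWith cmul b x) (evalWith cmul b y) = _
    rw [ihx, ihy]
    set e := evalWith Arr.aprod b with he
    set vx := variants x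
    set vy := variants y
    have h1 : Arr.aprod ((vx.map e).sum) ((vy.map e).sum)
        = (vx.map fun x' => ((vy.map fun y' => Arr.aprod (e x') (e y')).sum)).sum := by
      rw [aprod_sum_left, Multiset.map_map]
      refine congrArg Multiset.sum (Multiset.map_congr rfl fun x' _ => ?_)
      rw [Function.comp_apply, aprod_sum_right, Multiset.map_map]; rfl
    have h2 : Arr.aprod ((vy.map e).sum) ((vx.map e).sum)
        = (vx.map fun x' => ((vy.map fun y' => Arr.aprod (e y') (e x')).sum)).sum := by
      rw [aprod_sum_right, Multiset.map_map]
      refine congrArg Multiset.sum (Multiset.map_congr rfl fun x' _ => ?_)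
      rw [Function.comp_apply, aprod_sum_left, Multiset.map_map]; rfl
    show Arr.aprod ((vx.map e).sum) ((vy.map e).sum)
        + Arr.aprod ((vy.map e).sum) ((vx.map e).sum) = _
    rw [h1, h2, ← Multiset.sum_map_add]
    rw [variants_mul, Multiset.map_bind, Multiset.sum_bind]
    refine congrArg Multiset.sum (Multiset.map_congr rfl fun x' _ => ?_)
    rw [Multiset.map_bind, Multiset.sum_bind, ← Multiset.sum_map_add]
    refine congrArg Multiset.sum (Multiset.map_congr rfl fun y' _ => ?_)
    show Arr.aprod (e x') (e y') + Arr.aprod (e y') (e x')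
        = (Multiset.map e {FreeMagma.mul x' y', FreeMagma.mul y' x'}).sum
    simp only [Multiset.insert_eq_cons, Multiset.map_cons, Multiset.map_singleton,
      Multiset.sum_cons, Multiset.sum_singleton]
    rfl
@[simp] lemma evalWith_of {A : Type*} (mul : A → A → A) (b : Fin n → A) (i : Fin n) :
    evalWith mul b (FreeMagma.of i) = b i := rfl
@[simp] lemma evalWith_mul {A : Type*} (mul : A → A → A) (b : Fin n → A)
    (x y : FreeMagma (Fin n)) :
    evalWith mul b (x * y) = mul (evalWith mul b x) (evalWith mul b y) := rfl

end ArrLemmas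

section MonProd
variable {n : ℕ} (F : Type*) [CommRing F]

/-- A single guarded variable. -/
def hX (d : ℕ) (i : Fin n) (u v : ℕ) : MvPolynomial (Fin n × Fin d × Fin d) F :=
  if h : u < d ∧ v < d then MvPolynomial.X (i, ⟨u, h.1⟩, ⟨v, h.2⟩) else 0

/-- Recursive form of `monProd` on leaf-data lists, with explicit position counter. -/
def monProdL (d k1 k2 : ℕ) : List (Fin n × ℕ) → ℕ → MvPolynomial (Fin n × Fin d × Fin d) F
  | [], _ => 1
  | p :: L, t => hX F d p.1 (t + k1) (p.2 - 1 + k2) * monProdL d k1 k2 L (t + 1)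

lemma enumFrom_prod (d k1 k2 : ℕ) (L : List (Fin n × ℕ)) (t : ℕ) :
    (((L.zipIdx t).map Prod.swap).map fun p =>
      if h : p.1 + k1 < d ∧ p.2.2 - 1 + k2 < d then
        (MvPolynomial.X (p.2.1, ⟨p.1 + k1, h.1⟩, ⟨p.2.2 - 1 + k2, h.2⟩) :
          MvPolynomial (Fin n × Fin d × Fin d) F) else 0).prod
      = monProdL F d k1 k2 L t := by
  induction L generalizing t with
  | nil => rfl
  | cons p L ih =>
    rw [List.zipIdx_cons, List.map_cons, List.map_cons, List.prod_cons, ih]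
    rfl

lemma monProd_eq (d k1 k2 : ℕ) (m : FreeMagma (Fin n)) :
    monProd F d k1 k2 m = monProdL F d k1 k2 (leafData m 1) 0 := by
  rw [monProd, ← enumFrom_prod F d k1 k2 (leafData m 1) 0]

lemma monProdL_append (d k1 k2 : ℕ) (A B : List (Fin n × ℕ)) (t : ℕ) :
    monProdL F d k1 k2 (A ++ B) t
      = monProdL F d k1 k2 A t * monProdL F d k1 k2 B (t + A.length) := by
  induction A generalizing t with
  | nil => simp [monProdL]
  | cons p A ih =>
    show hX F d p.1 (t + k1) (p.2 - 1 + k2) * monProdL F d k1 k2 (A ++ B) (t + 1) = _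
    rw [ih]
    have h : t + 1 + A.length = t + (A.length + 1) := by omega
    rw [List.length_cons, h, ← mul_assoc]
    rfl

lemma monProdL_start (d k1 k2 a : ℕ) (L : List (Fin n × ℕ)) (t : ℕ) :
    monProdL F d k1 k2 L (a + t) = monProdL F d (k1 + a) k2 L t := by
  induction L generalizing t with
  | nil => rfl
  | cons p L ih =>
    show hX F d p.1 (a + t + k1) _ * monProdL F d k1 k2 L (a + t + 1)
      = hX F d p.1 (t + (k1 + a)) _ * monProdL F d (k1 + a) k2 L (t + 1)
    have h1 : a + t + 1 = a + (t + 1) := by omega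
    have h2 : a + t + k1 = t + (k1 + a) := by omega
    rw [h1, ih, h2]

lemma monProdL_level (d k1 k2 : ℕ) (L : List (Fin n × ℕ)) (hL : ∀ p ∈ L, 1 ≤ p.2) (t : ℕ) :
    monProdL F d k1 k2 (L.map fun p => (p.1, p.2 + 1)) t = monProdL F d k1 (k2 + 1) L t := by
  induction L generalizing t with
  | nil => rfl
  | cons p L ih =>
    show hX F d p.1 _ (p.2 + 1 - 1 + k2) * _ = hX F d p.1 _ (p.2 - 1 + (k2 + 1)) * _
    rw [ih (fun q hq => hL q (List.mem_cons_of_mem _ hq))]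
    have h1 : 1 ≤ p.2 := hL p (List.mem_cons_self)
    have h2 : p.2 + 1 - 1 + k2 = p.2 - 1 + (k2 + 1) := by omega
    rw [h2]

lemma monProd_mul (d k1 k2 : ℕ) (x y : FreeMagma (Fin n)) :
    monProd F d k1 k2 (x * y)
      = monProd F d k1 (k2 + 1) x * monProd F d (k1 + degM x) (k2 + 1) y := by
  rw [monProd_eq, monProd_eq, monProd_eq]
  have h1 : leafData (x * y) 1 = leafData x 2 ++ leafData y 2 := rfl
  rw [h1, monProdL_append]
  congr 1
  · rw [leafData_shift x 1, monProdL_level]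
    intro p hp
    exact (leafData_level hp).1
  · have h4 : (0 : ℕ) + (leafData x 2).length = (leafData x 2).length + 0 := by omega
    rw [h4, monProdL_start, leafData_shift y 1, monProdL_level, leafData_length]
    intro p hp
    exact (leafData_level hp).1

end MonProd
section EvalA
variable {n : ℕ} {F : Type*} [CommRing F] {d : ℕ}

lemma Z_apply (i : Fin n) (j j' : Fin (d+1)) (k : Fin d) :
    Z F n d i j j' k = if h : (j : ℕ) < d ∧ (j' : ℕ) = (j : ℕ) + 1 then
      MvPolynomial.X (i, ⟨(j : ℕ), h.1⟩, k) else 0 := rfl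

lemma evalA_apply (m : FreeMagma (Fin n)) (j j' : Fin (d+1)) (k : Fin d)
    (hj : (j : ℕ) + degM m ≤ d) (hk : (k : ℕ) + depthM m ≤ d) :
    evalWith Arr.aprod (Z F n d) m j j' k
      = if (j' : ℕ) = (j : ℕ) + degM m then monProd F d (j : ℕ) (k : ℕ) m else 0 := by
  induction m generalizing j j' k with
  | ih1 i =>
    rw [evalWith_of, Z_apply]
    have hd1 : degM (FreeMagma.of i) = 1 := rfl
    have hjd : (j : ℕ) < d := by omega
    have hmp : monProd F d (j : ℕ) (k : ℕ) (FreeMagma.of i)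
        = MvPolynomial.X (i, ⟨(j : ℕ), hjd⟩, k) := by
      rw [monProd_eq]
      show hX F d i (0 + (j : ℕ)) (1 - 1 + (k : ℕ)) * 1 = _
      rw [mul_one, hX]
      have hc : 0 + (j : ℕ) < d ∧ 1 - 1 + (k : ℕ) < d := by
        constructor <;> omega
      rw [dif_pos hc]
      congr 1
      simp [Prod.ext_iff, Fin.ext_iff]
    rw [hd1]
    by_cases h2 : (j' : ℕ) = (j : ℕ) + 1
    · rw [dif_pos ⟨hjd, h2⟩, if_pos h2, hmp]
    · rw [dif_neg (fun hc => h2 hc.2), if_neg h2]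
  | ih2 x y ihx ihy =>
    have hdx := degM_pos x
    have hdy := degM_pos y
    have hpx1 := depthM_le_degM x
    have hpy1 := depthM_le_degM y
    have hpx := depthM_pos x
    have hpy := depthM_pos y
    simp only [degM_mul, depthM_mul] at hj hk ⊢
    rw [evalWith_mul]
    show Arr.aprod _ _ j j' k = _
    rw [Arr.aprod]
    have hmaxx : depthM x ≤ max (depthM x) (depthM y) := le_max_left _ _
    have hmaxy : depthM y ≤ max (depthM x) (depthM y) := le_max_right _ _
    have hk1 : (k : ℕ) + 1 < d := by omega
    rw [dif_pos hk1]
    have hjx : (j : ℕ) + degM x ≤ d := by omega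
    have hl0 : (j : ℕ) + degM x < d + 1 := by omega
    set l0 : Fin (d + 1) := ⟨(j : ℕ) + degM x, hl0⟩ with hl0def
    have hsum : ∀ l : Fin (d + 1),
        evalWith Arr.aprod (Z F n d) x j l ⟨(k : ℕ) + 1, hk1⟩
          * evalWith Arr.aprod (Z F n d) y l j' ⟨(k : ℕ) + 1, hk1⟩
        = if l = l0 then monProd F d (j : ℕ) ((k : ℕ) + 1) x
            * evalWith Arr.aprod (Z F n d) y l j' ⟨(k : ℕ) + 1, hk1⟩ else 0 := by
      intro l
      rw [ihx j l ⟨(k : ℕ) + 1, hk1⟩ hjx (by show (k : ℕ) + 1 + depthM x ≤ d; omega)]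
      by_cases hl : l = l0
      · rw [if_pos hl, if_pos (by rw [hl])]
      · rw [if_neg hl, if_neg (fun hc => hl (Fin.ext hc)), zero_mul]
    rw [Finset.sum_congr rfl fun l _ => hsum l, Finset.sum_ite_eq' Finset.univ l0,
      if_pos (Finset.mem_univ l0)]
    rw [ihy l0 j' ⟨(k : ℕ) + 1, hk1⟩
      (by show (j : ℕ) + degM x + degM y ≤ d; omega)
      (by show (k : ℕ) + 1 + depthM y ≤ d; omega)]
    show monProd F d (j : ℕ) ((k : ℕ) + 1) x
        * (if (j' : ℕ) = (j : ℕ) + degM x + degM y then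
            monProd F d ((j : ℕ) + degM x) ((k : ℕ) + 1) y else 0) = _
    rw [mul_ite, mul_zero]
    by_cases hcond : (j' : ℕ) = (j : ℕ) + (degM x + degM y)
    · rw [if_pos (by omega : (j' : ℕ) = (j : ℕ) + degM x + degM y)]
      exact ((if_pos hcond).trans (monProd_mul F d _ _ x y)).symm
    · rw [if_neg (by omega : ¬ (j' : ℕ) = (j : ℕ) + degM x + degM y)]
      exact (if_neg hcond).symm

end EvalA
section Code
variable {n : ℕ} {d : ℕ}

/-- A single guarded exponent vector. -/
def hS (d : ℕ) (i : Fin n) (u v : ℕ) : (Fin n × Fin d × Fin d) →₀ ℕ :=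
  if h : u < d ∧ v < d then Finsupp.single (i, ⟨u, h.1⟩, ⟨v, h.2⟩) 1 else 0

/-- The exponent vector of the `MvPolynomial` monomial associated to a leaf-data list. -/
def codeL (d : ℕ) : List (Fin n × ℕ) → ℕ → ((Fin n × Fin d × Fin d) →₀ ℕ)
  | [], _ => 0
  | p :: L, t => hS d p.1 t (p.2 - 1) + codeL d L (t + 1)

/-- The exponent vector associated to a monomial. -/
def codeM (d : ℕ) (m : FreeMagma (Fin n)) : (Fin n × Fin d × Fin d) →₀ ℕ :=
  codeL d (leafData m 1) 0

variable (F : Type*) [CommRing F]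

lemma monProdL_eq_monomial (L : List (Fin n × ℕ)) (t : ℕ)
    (h1 : ∀ i < L.length, t + i < d) (h2 : ∀ p ∈ L, p.2 - 1 < d) :
    monProdL F d 0 0 L t = MvPolynomial.monomial (codeL d L t) 1 := by
  induction L generalizing t with
  | nil => simp [monProdL, codeL]
  | cons p L ih =>
    have htd : t < d := by have := h1 0 (by simp); omega
    have hpd : p.2 - 1 < d := h2 p (List.mem_cons_self)
    show hX F d p.1 (t + 0) (p.2 - 1 + 0) * monProdL F d 0 0 L (t + 1) = _
    rw [ih (t + 1) (fun i hi => by have := h1 (i + 1) (by simp; omega); omega)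
        (fun q hq => h2 q (List.mem_cons_of_mem _ hq))]
    show hX F d p.1 (t + 0) (p.2 - 1 + 0) * _
        = MvPolynomial.monomial (hS d p.1 t (p.2 - 1) + codeL d L (t + 1)) 1
    rw [Nat.add_zero, Nat.add_zero, hX, hS, dif_pos ⟨htd, hpd⟩, dif_pos ⟨htd, hpd⟩]
    rw [show (MvPolynomial.X (p.1, ⟨t, htd⟩, ⟨p.2 - 1, hpd⟩) :
        MvPolynomial (Fin n × Fin d × Fin d) F)
      = MvPolynomial.monomial (Finsupp.single (p.1, ⟨t, htd⟩, ⟨p.2 - 1, hpd⟩) 1) 1 from rfl]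
    rw [MvPolynomial.monomial_mul, one_mul]

lemma monProd_eq_monomial (m : FreeMagma (Fin n)) (hm : degM m ≤ d) :
    monProd F d 0 0 m = MvPolynomial.monomial (codeM d m) 1 := by
  rw [monProd_eq, codeM]
  apply monProdL_eq_monomial
  · intro i hi
    rw [leafData_length] at hi
    omega
  · intro p hp
    have h := leafData_level hp
    have := depthM_le_degM m
    omega

lemma codeL_apply_eq_zero (L : List (Fin n × ℕ)) (t : ℕ) (q : Fin n × Fin d × Fin d)
    (hq : (q.2.1 : ℕ) < t) : codeL d L t q = 0 := by
  induction L generalizing t with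
  | nil => rfl
  | cons p L ih =>
    show (hS d p.1 t (p.2 - 1) + codeL d L (t + 1)) q = 0
    rw [Finsupp.add_apply, ih (t + 1) (by omega)]
    rw [hS]
    split
    · rw [Finsupp.single_apply, if_neg, add_zero]
      intro hc
      have hq21 : (q.2.1 : ℕ) = t := by rw [← hc]
      omega
    · rfl

lemma codeL_inj (L L' : List (Fin n × ℕ)) (t : ℕ)
    (g1 : ∀ i < L.length, t + i < d) (g2 : ∀ p ∈ L, 1 ≤ p.2 ∧ p.2 - 1 < d)
    (g1' : ∀ i < L'.length, t + i < d) (g2' : ∀ p ∈ L', 1 ≤ p.2 ∧ p.2 - 1 < d)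
    (h : codeL d L t = codeL d L' t) : L = L' := by
  induction L generalizing L' t with
  | nil =>
    cases L' with
    | nil => rfl
    | cons p' L' =>
      exfalso
      have htd : t < d := by have := g1' 0 (by simp); omega
      have hpd : p'.2 - 1 < d := (g2' p' (List.mem_cons_self)).2
      have happ := DFunLike.congr_fun h
        (p'.1, ⟨t, htd⟩, ⟨p'.2 - 1, hpd⟩)
      show False
      rw [show codeL d [] t = 0 from rfl] at happ
      have hr : codeL d (p' :: L') t (p'.1, ⟨t, htd⟩, ⟨p'.2 - 1, hpd⟩)
          = 1 + codeL d L' (t + 1) (p'.1, ⟨t, htd⟩, ⟨p'.2 - 1, hpd⟩) := by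
        show (hS d p'.1 t (p'.2 - 1) + codeL d L' (t + 1)) _ = _
        rw [Finsupp.add_apply, hS, dif_pos ⟨htd, hpd⟩, Finsupp.single_eq_same]
      rw [hr, codeL_apply_eq_zero L' (t + 1) _ (by simp)] at happ
      simp at happ
  | cons p L ih =>
    cases L' with
    | nil =>
      exfalso
      have htd : t < d := by have := g1 0 (by simp); omega
      have hpd : p.2 - 1 < d := (g2 p (List.mem_cons_self)).2
      have happ := DFunLike.congr_fun h
        (p.1, ⟨t, htd⟩, ⟨p.2 - 1, hpd⟩)
      rw [show codeL d [] t = 0 from rfl] at happ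
      have hr : codeL d (p :: L) t (p.1, ⟨t, htd⟩, ⟨p.2 - 1, hpd⟩)
          = 1 + codeL d L (t + 1) (p.1, ⟨t, htd⟩, ⟨p.2 - 1, hpd⟩) := by
        show (hS d p.1 t (p.2 - 1) + codeL d L (t + 1)) _ = _
        rw [Finsupp.add_apply, hS, dif_pos ⟨htd, hpd⟩, Finsupp.single_eq_same]
      rw [hr, codeL_apply_eq_zero L (t + 1) _ (by simp)] at happ
      simp at happ
    | cons p' L' =>
      have htd : t < d := by have := g1 0 (by simp); omega
      have hpd : p.2 - 1 < d := (g2 p (List.mem_cons_self)).2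
      have hpd' : p'.2 - 1 < d := (g2' p' (List.mem_cons_self)).2
      set v : Fin n × Fin d × Fin d := (p.1, ⟨t, htd⟩, ⟨p.2 - 1, hpd⟩) with hv
      set v' : Fin n × Fin d × Fin d := (p'.1, ⟨t, htd⟩, ⟨p'.2 - 1, hpd'⟩) with hv'
      have hL : codeL d (p :: L) t = hS d p.1 t (p.2 - 1) + codeL d L (t + 1) := rfl
      have hL' : codeL d (p' :: L') t = hS d p'.1 t (p'.2 - 1) + codeL d L' (t + 1) := rfl
      have hSv : hS d p.1 t (p.2 - 1) = Finsupp.single v 1 := by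
        rw [hS, dif_pos ⟨htd, hpd⟩]
      have hSv' : hS d p'.1 t (p'.2 - 1) = Finsupp.single v' 1 := by
        rw [hS, dif_pos ⟨htd, hpd'⟩]
      rw [hL, hL', hSv, hSv'] at h
      have happ := DFunLike.congr_fun h v
      rw [Finsupp.add_apply, Finsupp.add_apply, Finsupp.single_eq_same,
        codeL_apply_eq_zero L (t + 1) v (by simp [hv]),
        codeL_apply_eq_zero L' (t + 1) v (by simp [hv]), Finsupp.single_apply] at happ
      have hvv : v' = v := by
        by_contra hc
        rw [if_neg hc] at happ
        simp at happ
      have hpp : p = p' := by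
        have h1 : p.1 = p'.1 := by
          have := congrArg Prod.fst hvv; simpa [hv, hv'] using this.symm
        have h2 : p.2 = p'.2 := by
          have h3 := congrArg (fun r : Fin n × Fin d × Fin d => (r.2.2 : ℕ)) hvv
          simp only [hv, hv'] at h3
          have hp1 := (g2 p (List.mem_cons_self)).1
          have hp1' := (g2' p' (List.mem_cons_self)).1
          omega
        exact Prod.ext h1 h2
      rw [hvv] at h
      have htail := add_left_cancel h
      have hg1 : ∀ i < L.length, t + 1 + i < d := by
        intro i hi
        have := g1 (i + 1) (by simpa using Nat.succ_lt_succ hi)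
        omega
      have hg1' : ∀ i < L'.length, t + 1 + i < d := by
        intro i hi
        have := g1' (i + 1) (by simpa using Nat.succ_lt_succ hi)
        omega
      have hLL := ih L' (t + 1) hg1
        (fun q hq => g2 q (List.mem_cons_of_mem _ hq)) hg1'
        (fun q hq => g2' q (List.mem_cons_of_mem _ hq)) htail
      rw [hpp, hLL]

lemma codeM_inj (m m' : FreeMagma (Fin n)) (hm : degM m ≤ d) (hm' : degM m' ≤ d)
    (h : codeM d m = codeM d m') : m = m' := by
  apply leafData_inj m m' 1
  refine codeL_inj (leafData m 1) (leafData m' 1) 0 ?_ ?_ ?_ ?_ h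
  · intro i hi; rw [leafData_length] at hi; omega
  · intro p hp
    have h1 := leafData_level hp
    have := depthM_le_degM m
    omega
  · intro i hi; rw [leafData_length] at hi; omega
  · intro p hp
    have h1 := leafData_level hp
    have := depthM_le_degM m'
    omega

end Code
section CountIcomm
variable {n : ℕ}

lemma sum_map_indicator {α : Type*} [DecidableEq α] {F : Type*} [CommRing F]
    (s : Multiset α) (a : α) :
    (s.map fun x => if x = a then (1 : F) else 0).sum = (s.count a : F) := by
  induction s using Multiset.induction_on with
  | empty => simp
  | cons b s ih =>
    rw [Multiset.map_cons, Multiset.sum_cons, ih, Multiset.count_cons]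
    push_cast
    by_cases h : b = a
    · rw [if_pos h, if_pos h.symm]; ring
    · rw [if_neg h, if_neg (fun hh => h hh.symm)]; ring

/-- The commutativity setoid. -/
def commSetoid (n : ℕ) : Setoid (FreeMagma (Fin n)) :=
  ⟨CommEq, ⟨CommEq.refl, CommEq.symm, CommEq.trans⟩⟩

open scoped Classical in
lemma mem_Icomm_of_classSums {F : Type*} [Field F]
    (f0 : FreeNonUnitalNonAssocAlgebra F (Fin n))
    (h : ∀ m0 ∈ (coeffOf f0).support,
      (∑ m ∈ (coeffOf f0).support, if CommEq m m0 then (coeffOf f0) m else 0) = 0) :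
    f0 ∈ Icomm F n := by
  classical
  set s := (coeffOf f0).support with hs
  set c : FreeMagma (Fin n) → F := fun m => (coeffOf f0) m with hc
  let rep : FreeMagma (Fin n) → FreeMagma (Fin n) :=
    fun m => (@Quotient.mk _ (commSetoid n) m).out
  have hrep : ∀ m, CommEq m (rep m) := fun m => (Quotient.mk_out (s := commSetoid n) m).symm
  have hrepEq : ∀ m m', CommEq m m' ↔ rep m = rep m' := by
    intro m m'
    constructor
    · intro h'
      show (Quotient.mk _ m).out = (Quotient.mk _ m').out
      rw [Quotient.out_inj]
      exact Quotient.sound h'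
    · intro h'
      have : (Quotient.mk (commSetoid n) m) = Quotient.mk _ m' := by
        rw [← Quotient.out_inj]
        exact h'
      exact Quotient.exact this
  have h1 : ∀ m, c m • single1 F m = MonoidAlgebra.ofCoeff (Finsupp.single m (c m)) := by
    intro m
    show c m • MonoidAlgebra.ofCoeff (Finsupp.single m (1 : F)) = _
    rw [← MonoidAlgebra.ofCoeff_smul, Finsupp.smul_single', mul_one]
  have hf0 : f0 = ∑ m ∈ s, c m • single1 F m := by
    rw [Finset.sum_congr rfl fun m _ => h1 m, ← MonoidAlgebra.ofCoeff_sum]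
    show MonoidAlgebra.ofCoeff (coeffOf f0 : FreeMagma (Fin n) →₀ F)
      = MonoidAlgebra.ofCoeff (∑ m ∈ s, Finsupp.single m (c m))
    congr 1
    conv_lhs => rw [← Finsupp.sum_single (coeffOf f0)]
    rfl
  have hdecomp : f0 = (∑ m ∈ s, c m • (single1 F m - single1 F (rep m)))
      + ∑ m ∈ s, c m • single1 F (rep m) := by
    rw [← Finset.sum_add_distrib]
    rw [hf0]
    apply Finset.sum_congr rfl
    intro m _
    rw [smul_sub]
    abel
  rw [hdecomp]
  apply Submodule.add_mem
  · apply Submodule.sum_mem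
    intro m _
    apply Submodule.smul_mem
    apply Submodule.subset_span
    exact ⟨m, rep m, hrep m, rfl⟩
  · have hz : (∑ m ∈ s, c m • single1 F (rep m)) = 0 := by
      rw [← Finset.sum_fiberwise_of_maps_to (g := rep) (t := s.image rep)
        (fun m hm => Finset.mem_image_of_mem rep hm)]
      apply Finset.sum_eq_zero
      intro r hr
      obtain ⟨m0, hm0s, hm0r⟩ := Finset.mem_image.1 hr
      have hfilter : s.filter (fun m => rep m = r) = s.filter (fun m => CommEq m m0) := by
        apply Finset.filter_congr
        intro m _
        rw [hrepEq m m0, hm0r]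
      rw [hfilter]
      have hsum : ∑ m ∈ s.filter (fun m => CommEq m m0), c m • single1 F (rep m)
          = (∑ m ∈ s.filter (fun m => CommEq m m0), c m) • single1 F r := by
        rw [Finset.sum_smul]
        apply Finset.sum_congr rfl
        intro m hm
        have hcm : CommEq m m0 := (Finset.mem_filter.1 hm).2
        have : rep m = r := by rw [(hrepEq m m0).1 hcm, hm0r]
        rw [this]
      rw [hsum]
      have : (∑ m ∈ s.filter (fun m => CommEq m m0), c m) = 0 := by
        rw [Finset.sum_filter]
        exact h m0 hm0s
      rw [this, zero_smul]
    rw [hz]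
    exact Submodule.zero_mem _
end CountIcomm
section Glue
variable {n : ℕ} {d : ℕ} {R : Type*} [CommRing R]

lemma Arr.finset_sum_apply {γ : Type*} (s : Finset γ) (v : γ → Arr d R)
    (i j : Fin (d+1)) (k : Fin d) :
    (∑ m ∈ s, v m) i j k = ∑ m ∈ s, v m i j k := by
  induction s using Finset.cons_induction with
  | empty => rfl
  | cons a s ha ih => rw [Finset.sum_cons, Finset.sum_cons, Arr.add_apply, ih]

lemma Arr.multiset_sum_apply (s : Multiset (Arr d R)) (i j : Fin (d+1)) (k : Fin d) :
    s.sum i j k = (s.map fun x => x i j k).sum := by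
  induction s using Multiset.induction_on with
  | empty => rfl
  | cons a s ih => rw [Multiset.sum_cons, Multiset.map_cons, Multiset.sum_cons,
      Arr.add_apply, ih]

variable {F : Type*} [CommRing F]

/-- Entrywise application of a ring homomorphism. -/
def mapArr (φ : R →+* F) (x : Arr d R) : Arr d F := fun i j k => φ (x i j k)

lemma mapArr_aprod (φ : R →+* F) (x y : Arr d R) :
    mapArr φ (Arr.aprod x y) = Arr.aprod (mapArr φ x) (mapArr φ y) := by
  funext i j k
  show φ (Arr.aprod x y i j k) = _
  rw [Arr.aprod, Arr.aprod]
  split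
  · rw [map_sum]
    apply Finset.sum_congr rfl
    intro l _
    rw [map_mul]
    rfl
  · exact map_zero φ

lemma mapArr_cmul (φ : R →+* F) (x y : Arr d R) :
    mapArr φ (cmul x y) = cmul (mapArr φ x) (mapArr φ y) := by
  show mapArr φ (Arr.aprod x y + Arr.aprod y x) = _
  funext i j k
  show φ ((Arr.aprod x y + Arr.aprod y x) i j k) = _
  rw [Arr.add_apply, map_add]
  show _ = (Arr.aprod (mapArr φ x) (mapArr φ y) + Arr.aprod (mapArr φ y) (mapArr φ x)) i j k
  rw [Arr.add_apply, ← mapArr_aprod φ x y, ← mapArr_aprod φ y x]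
  rfl

lemma mapArr_evalWith (φ : R →+* F) (b : Fin n → Arr d R) (m : FreeMagma (Fin n)) :
    evalWith cmul (fun i => mapArr φ (b i)) m = mapArr φ (evalWith cmul b m) := by
  induction m with
  | ih1 i => rfl
  | ih2 x y ihx ihy => rw [evalWith_mul, evalWith_mul, ihx, ihy, mapArr_cmul]

end Glue

section Glue2
variable {n : ℕ} {d : ℕ} {F : Type*} [Field F]

lemma mapArr_evalNA (z : (Fin n × Fin d × Fin d) → F)
    (b : Fin n → Arr d (MvPolynomial (Fin n × Fin d × Fin d) F))
    (f0 : FreeNonUnitalNonAssocAlgebra F (Fin n)) :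
    evalNAWith cmul (fun i => mapArr (MvPolynomial.eval z) (b i)) f0
      = mapArr (MvPolynomial.eval z) (evalNAWith cmul b f0) := by
  rw [evalNAWith, evalNAWith, Finsupp.sum, Finsupp.sum]
  funext i j k
  rw [Arr.finset_sum_apply]
  show _ = MvPolynomial.eval z ((∑ m ∈ (coeffOf f0).support,
      (coeffOf f0) m • evalWith cmul b m) i j k)
  rw [Arr.finset_sum_apply, map_sum]
  apply Finset.sum_congr rfl
  intro m _
  rw [Arr.smul_apply, Arr.smul_apply, mapArr_evalWith]
  show (coeffOf f0) m • mapArr (MvPolynomial.eval z) (evalWith cmul b m) i j k = _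
  rw [MvPolynomial.smul_eq_C_mul, map_mul, MvPolynomial.eval_C]
  rfl

/-- `inr` as an additive monoid homomorphism. -/
def inrAdd (F : Type*) (A : Type*) [CommSemiring F] [AddCommMonoid A] :
    A →+ Unitization F A where
  toFun a := Unitization.inr a
  map_zero' := by ext <;> simp
  map_add' a b := by ext <;> simp

lemma evalWith_inr {A : Type*} [AddCommMonoid A] [Mul A] [Module F A]
    (w : Fin n → A) (m : FreeMagma (Fin n)) :
    evalWith (· * ·) (fun i => (Unitization.inr (w i) : Unitization F A)) m
      = Unitization.inr (evalWith (· * ·) w m) := by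
  induction m with
  | ih1 i => rfl
  | ih2 x y ihx ihy => rw [evalWith_mul, evalWith_mul, ihx, ihy, Unitization.inr_mul]

lemma evalNA_inr {A : Type*} [AddCommMonoid A] [Mul A] [Module F A]
    (w : Fin n → A) (f0 : FreeNonUnitalNonAssocAlgebra F (Fin n)) :
    evalNA (fun i => (Unitization.inr (w i) : Unitization F A)) f0
      = Unitization.inr (evalNA w f0) := by
  rw [evalNA, evalNA, evalNAWith, evalNAWith]
  have h1 : ∀ (m : FreeMagma (Fin n)) (c : F), c • evalWith (· * ·)
      (fun i => (Unitization.inr (w i) : Unitization F A)) m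
      = inrAdd F A (c • evalWith (· * ·) w m) := by
    intro m c
    rw [evalWith_inr]
    show c • (Unitization.inr _ : Unitization F A) = Unitization.inr _
    rw [← Unitization.inr_smul]
  have h2 : ((coeffOf f0).sum fun m c => c • evalWith (· * ·)
      (fun i => (Unitization.inr (w i) : Unitization F A)) m)
      = (coeffOf f0).sum fun m c => inrAdd F A (c • evalWith (· * ·) w m) :=
    Finsupp.sum_congr fun m _ => h1 m ((coeffOf f0) m)
  rw [h2]
  exact (map_finsuppSum (inrAdd F A) (coeffOf f0) _).symm

end Glue2
section Coeff
variable {F : Type*} [CommRing F] {σ : Type*}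

lemma coeff_multiset_sum (c : σ →₀ ℕ) (s : Multiset (MvPolynomial σ F)) :
    MvPolynomial.coeff c s.sum = (s.map (MvPolynomial.coeff c)).sum := by
  induction s using Multiset.induction_on with
  | empty => simp
  | cons a s ih => rw [Multiset.sum_cons, Multiset.map_cons, Multiset.sum_cons,
      MvPolynomial.coeff_add, ih]

end Coeff
/-- Lemma 3.6 / `lowerBound2`.  Let `F` be a field of characteristic `0`
and `n, d ≥ 1`.  Let `f` be a nonzero element of the unitization of `F_{Ā,C̄}[X]` whose
`F_{Ā,C̄}[X]`-component `f₀` has degree `≤ d` and satisfies `f₀ ∉ I_comm`, or whose scalar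
component is nonzero (i.e. the image of `f` in the unitization of `F_{Ā,C}[X]` is nonzero).
Then `f` is not a polynomial identity for the commutative nonassociative unital algebra
`C_d = Unitization F (C'_d(F))`: there exist `b_1, …, b_n ∈ C_d` such that the evaluation of
`f` at `(b_1, …, b_n)` (via the unique unital `F`-algebra homomorphism sending `x_i ↦ b_i`
and the adjoined unit to the unit of `C_d`) is nonzero. -/
theorem not_PI_for_Cd {F : Type*} [Field F] [CharZero F] (n d : ℕ) (hn : 1 ≤ n) (hd : 1 ≤ d)
    (f : Unitization F (FreeNonUnitalNonAssocAlgebra F (Fin n))) (hf : f ≠ 0)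
    (hdeg : ∀ m ∈ (coeffOf f.snd).support, degM m ≤ d)
    (hI : f.snd ∉ Icomm F n ∨ f.fst ≠ 0) :
    ∃ b : Fin n → Unitization F (CArr d F), evalUnit b f ≠ 0 := by
  classical
  rcases hI with hI | hI
  · -- main case: the nonassociative part is not in the commutativity ideal
    have hex : ∃ m0 ∈ (coeffOf f.snd).support,
        (∑ m ∈ (coeffOf f.snd).support,
          if CommEq m m0 then (coeffOf f.snd) m else 0) ≠ 0 := by
      by_contra hall
      push_neg at hall
      exact hI (mem_Icomm_of_classSums f.snd hall)
    obtain ⟨m0, hm0s, hS0⟩ := hex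
    have hm0d : degM m0 ≤ d := hdeg m0 hm0s
    have hj'lt : degM m0 < d + 1 := by omega
    let j0 : Fin (d + 1) := ⟨0, Nat.succ_pos d⟩
    let j' : Fin (d + 1) := ⟨degM m0, hj'lt⟩
    let k0 : Fin d := ⟨0, hd⟩
    let P : Arr d (MvPolynomial (Fin n × Fin d × Fin d) F) :=
      evalNAWith cmul (Z F n d) f.snd
    let q : MvPolynomial (Fin n × Fin d × Fin d) F := P j0 j' k0
    let N : ℕ := (variants m0).count m0
    have hNpos : 0 < N := Multiset.count_pos.2 (mem_variants_self m0)
    have claim : ∀ m ∈ (coeffOf f.snd).support,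
        MvPolynomial.coeff (codeM d m0) (evalWith cmul (Z F n d) m j0 j' k0)
          = if CommEq m m0 then (N : F) else 0 := by
      intro m hms
      have hmd : degM m ≤ d := hdeg m hms
      rw [evalWith_cmul_eq_sum_variants, Arr.multiset_sum_apply, Multiset.map_map,
        coeff_multiset_sum, Multiset.map_map]
      have hterm : ∀ m' ∈ variants m,
          (MvPolynomial.coeff (codeM d m0) ∘ (fun x : Arr d _ => x j0 j' k0)
            ∘ evalWith Arr.aprod (Z F n d)) m'
          = if m' = m0 then (1 : F) else 0 := by
        intro m' hm'
        have hcm : CommEq m m' := commEq_of_mem_variants hm'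
        have hdm' : degM m' = degM m := hcm.degM_eq.symm
        have hdepth := depthM_le_degM m'
        show MvPolynomial.coeff (codeM d m0)
          (evalWith Arr.aprod (Z F n d) m' j0 j' k0) = _
        rw [evalA_apply m' j0 j' k0 (by show 0 + degM m' ≤ d; omega)
          (by show 0 + depthM m' ≤ d; omega)]
        by_cases hcond : ((j' : ℕ) = (j0 : ℕ) + degM m')
        · rw [if_pos hcond]
          have hdeq : degM m' = degM m0 := by
            have h1 : (j' : ℕ) = degM m0 := rfl
            have h2 : (j0 : ℕ) = 0 := rfl
            omega
          rw [show monProd F d (j0 : ℕ) (k0 : ℕ) m' = monProd F d 0 0 m' from rfl]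
          rw [monProd_eq_monomial F m' (by omega), MvPolynomial.coeff_monomial]
          by_cases hmm : m' = m0
          · rw [if_pos (by rw [hmm]), if_pos hmm]
          · rw [if_neg (fun hcc => hmm (codeM_inj m' m0 (by omega) hm0d hcc)),
              if_neg hmm]
        · rw [if_neg hcond, MvPolynomial.coeff_zero]
          rw [if_neg]
          intro he
          apply hcond
          show (degM m0 : ℕ) = 0 + degM m'
          rw [he]
          omega
      rw [Multiset.map_congr rfl hterm, sum_map_indicator]
      by_cases hc : CommEq m m0
      · rw [variants_eq_of_commEq hc, if_pos hc]
      · rw [if_neg hc, Multiset.count_eq_zero.2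
          (fun hmem => hc (commEq_of_mem_variants hmem)), Nat.cast_zero]
    have hcoeff : MvPolynomial.coeff (codeM d m0) q
        = (∑ m ∈ (coeffOf f.snd).support,
            if CommEq m m0 then (coeffOf f.snd) m else 0) * N := by
      show MvPolynomial.coeff (codeM d m0)
        ((Finsupp.sum (coeffOf f.snd) fun m c => c • evalWith cmul (Z F n d) m) j0 j' k0) = _
      rw [Finsupp.sum, Arr.finset_sum_apply, MvPolynomial.coeff_sum, Finset.sum_mul]
      apply Finset.sum_congr rfl
      intro m hms
      rw [Arr.smul_apply, MvPolynomial.coeff_smul, claim m hms]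
      by_cases hc : CommEq m m0
      · rw [if_pos hc, if_pos hc]
        show (coeffOf f.snd) m * (N : F) = _
        ring
      · rw [if_neg hc, if_neg hc, smul_zero, zero_mul]
    have hqne : q ≠ 0 := by
      intro h0
      rw [h0, MvPolynomial.coeff_zero] at hcoeff
      have hN : ((N : F)) ≠ 0 := Nat.cast_ne_zero.2 (by omega)
      exact (mul_ne_zero hS0 hN) hcoeff.symm
    obtain ⟨z, hz⟩ : ∃ z : (Fin n × Fin d × Fin d) → F, MvPolynomial.eval z q ≠ 0 := by
      by_contra hall
      push_neg at hall
      apply hqne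
      apply MvPolynomial.funext
      intro x
      rw [hall x, map_zero]
    let w : Fin n → Arr d F := fun i => mapArr (MvPolynomial.eval z) (Z F n d i)
    have hw : evalNAWith cmul w f.snd = mapArr (MvPolynomial.eval z) P :=
      mapArr_evalNA z (Z F n d) f.snd
    have hwne : evalNAWith cmul w f.snd ≠ 0 := by
      intro h0
      apply hz
      show MvPolynomial.eval z (P j0 j' k0) = 0
      have : mapArr (MvPolynomial.eval z) P j0 j' k0 = 0 := by
        rw [← hw, h0]
        rfl
      exact this
    refine ⟨fun i => Unitization.inr (CArr.ofArr (w i)), ?_⟩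
    intro h0
    have hsnd := congrArg Prod.snd (congrArg Unitization.toProd h0)
    rw [evalUnit, Unitization.snd_add, Unitization.snd_inl,
      evalNA_inr (fun i => CArr.ofArr (w i)) f.snd, Unitization.snd_inr, zero_add,
      Unitization.snd_zero] at hsnd
    apply hwne
    exact hsnd
  · -- scalar case
    refine ⟨fun i => Unitization.inr (0 : CArr d F), ?_⟩
    intro h0
    have hfst := congrArg Prod.fst (congrArg Unitization.toProd h0)
    rw [evalUnit, Unitization.fst_add, Unitization.fst_inl,
      evalNA_inr (fun _ => (0 : CArr d F)) f.snd, Unitization.fst_inr, add_zero,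
      Unitization.fst_zero] at hfst
    exact hI hfst


end NAPIT
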